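/- Let X be a compact geodesic metric space with basepoint x₀, let μ be a Borel measure on X with 0 < μ(X) < ∞, and let s > 0 be a real number such that (i) every loop in X of length strictly less than s is null-homotopic rel its basepoint, and (ii) μ(closedBall(x,r)) ≥ 2r² for every x ∈ X and every real r with 0 < r ≤ s/2. For T > 0, let P'(T) denote the (finite) number of elements of π₁(X, x₀) admitting a representative loop based at x₀ of length at most T. Then for all real numbers α, β > 0 with 4α + β < 1/2, one has limsup_{T → ∞} (log P'(T))/T ≤ (1/(βs)) · log( μ(X)/(2α²s²) ). -/

import Mathlib

open Metric MeasureTheory Filter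

attribute [local instance] Path.Homotopic.setoid

/-- The length of a continuous path in a metric space: its total variation. -/
noncomputable def pathLength {X : Type*} [PseudoEMetricSpace X] {x y : X} (γ : Path x y) :
    ENNReal :=
  eVariationOn γ Set.univ

/-- A metric space is geodesic if any two points are joined by a path of length
equal to the distance between them. -/
def IsGeodesicSpace (X : Type*) [MetricSpace X] : Prop :=
  ∀ x y : X, ∃ γ : Path x y, pathLength γ = ENNReal.ofReal (dist x y)

/-- An element of the fundamental group, constructed from a homotopy class of loops. -/
noncomputable def FundamentalGroup.fromLoop {X : Type*} [TopologicalSpace X] {x : X}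
    (p : Path.Homotopic.Quotient x x) : FundamentalGroup X x :=
  FundamentalGroup.fromPath (X := TopCat.of X) p

namespace EntropyAux

open Set

variable {X : Type*} [PseudoEMetricSpace X]

/-- variation of the extension of a path on `[a,b] ⊆ ℝ`. -/
noncomputable def pvar {x y : X} (δ : Path x y) (a b : ℝ) : ENNReal :=
  eVariationOn δ.extend (Set.Icc a b)

theorem pvar_self {x y : X} (δ : Path x y) (a : ℝ) : pvar δ a a = 0 := by
  rw [pvar, Set.Icc_self]
  exact eVariationOn.subsingleton _ (Set.subsingleton_singleton)

theorem pvar_mono {x y : X} (δ : Path x y) {a b c d : ℝ} (h1 : c ≤ a) (h2 : b ≤ d) :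
    pvar δ a b ≤ pvar δ c d :=
  eVariationOn.mono _ (Set.Icc_subset_Icc h1 h2)

theorem pvar_add {x y : X} (δ : Path x y) {a b c : ℝ} (hab : a ≤ b) (hbc : b ≤ c) :
    pvar δ a b + pvar δ b c = pvar δ a c := by
  have := eVariationOn.Icc_add_Icc δ.extend (s := Set.univ) hab hbc (Set.mem_univ b)
  simpa [Set.univ_inter, pvar] using this

theorem pathLength_eq_pvar {x y : X} (δ : Path x y) : pathLength δ = pvar δ 0 1 := by
  have h1 : pathLength δ = eVariationOn (δ.extend ∘ (Subtype.val : unitInterval → ℝ)) Set.univ := by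
    apply eVariationOn.eq_of_eqOn
    intro t _
    exact (δ.extend_extends' t).symm
  rw [h1, eVariationOn.comp_eq_of_monotoneOn δ.extend Subtype.val
    (((Subtype.strictMono_coe _).monotone).monotoneOn _)]
  congr 1
  ext t
  simp only [Set.image_univ, Subtype.range_coe_subtype, Set.mem_setOf_eq, Set.mem_Icc]

theorem edist_le_pvar {x y : X} (δ : Path x y) {a b : ℝ} (ha : a ≤ b) :
    edist (δ.extend b) (δ.extend a) ≤ pvar δ a b :=
  eVariationOn.edist_le δ.extend ⟨ha, le_rfl⟩ ⟨le_rfl, ha⟩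

theorem pathLength_cast {x y x' y' : X} (δ : Path x y) (hx : x' = x) (hy : y' = y) :
    pathLength (δ.cast hx hy) = pathLength δ := by
  unfold pathLength
  apply eVariationOn.eq_of_eqOn
  intro t _
  simp [Path.cast_coe]

theorem pathLength_symm {x y : X} (δ : Path x y) : pathLength δ.symm = pathLength δ := by
  have h1 : pathLength δ.symm =
      eVariationOn (⇑δ ∘ (unitInterval.symm : unitInterval → unitInterval)) Set.univ := by
    apply eVariationOn.eq_of_eqOn
    intro t _
    rfl
  rw [h1, eVariationOn.comp_eq_of_antitoneOn ⇑δ _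
    (fun u _ v _ huv => unitInterval.symm_le_symm.mpr huv)]
  unfold pathLength
  congr 1
  rw [Set.image_univ]
  exact unitInterval.symm_involutive.surjective.range_eq

theorem eVar_Icc_add {X : Type*} [PseudoEMetricSpace X] (f : ℝ → X) {a b c : ℝ}
    (hab : a ≤ b) (hbc : b ≤ c) :
    eVariationOn f (Set.Icc a b) + eVariationOn f (Set.Icc b c) = eVariationOn f (Set.Icc a c) := by
  simpa [Set.univ_inter] using eVariationOn.Icc_add_Icc f (s := Set.univ) hab hbc (Set.mem_univ b)

theorem pathLength_trans {x y z : X} (p : Path x y) (q : Path y z) :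
    pathLength (p.trans q) = pathLength p + pathLength q := by
  classical
  set h : ℝ → X := fun t => if t ≤ 1 / 2 then p.extend (2 * t) else q.extend (2 * t - 1) with hh
  have hcoe : ⇑(p.trans q) = h ∘ (Subtype.val : unitInterval → ℝ) := rfl
  have h1 : pathLength (p.trans q) = eVariationOn h (Set.Icc 0 1) := by
    unfold pathLength
    rw [hcoe, eVariationOn.comp_eq_of_monotoneOn h Subtype.val
      (((Subtype.strictMono_coe _).monotone).monotoneOn _)]
    congr 1
    ext t
    simp only [Set.image_univ, Subtype.range_coe_subtype, Set.mem_setOf_eq, Set.mem_Icc]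
  have himg1 : (fun t : ℝ => 2 * t) '' Set.Icc 0 (1 / 2) = Set.Icc 0 1 := by
    have := Set.image_affine_Icc' (a := (2 : ℝ)) (by norm_num) 0 0 (1 / 2)
    simpa using this
  have himg2 : (fun t : ℝ => 2 * t - 1) '' Set.Icc (1 / 2) 1 = Set.Icc 0 1 := by
    have h0 := Set.image_affine_Icc' (a := (2 : ℝ)) (by norm_num) (-1) (1 / 2) 1
    have heq : (fun x : ℝ => 2 * x + -1) = (fun t : ℝ => 2 * t - 1) := by funext u; ring
    rw [heq] at h0
    norm_num at h0
    exact h0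
  have hp1 : eVariationOn h (Set.Icc 0 (1 / 2)) = pathLength p := by
    have he : eVariationOn h (Set.Icc 0 (1 / 2)) =
        eVariationOn (p.extend ∘ fun t : ℝ => 2 * t) (Set.Icc 0 (1 / 2)) := by
      apply eVariationOn.eq_of_eqOn
      intro t ht
      simp only [hh, Function.comp_apply, if_pos ht.2]
    rw [he, eVariationOn.comp_eq_of_monotoneOn p.extend _
      (((strictMono_mul_left_of_pos (by norm_num : (0:ℝ) < 2)).monotone).monotoneOn _), himg1]
    rw [pathLength_eq_pvar]
    rfl
  have hq1 : eVariationOn h (Set.Icc (1 / 2) 1) = pathLength q := by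
    have he : eVariationOn h (Set.Icc (1 / 2) 1) =
        eVariationOn (q.extend ∘ fun t : ℝ => 2 * t - 1) (Set.Icc (1 / 2) 1) := by
      apply eVariationOn.eq_of_eqOn
      intro t ht
      rcases eq_or_lt_of_le ht.1 with h12 | h12
      · simp only [hh, Function.comp_apply, ← h12]
        norm_num
      · simp only [hh, Function.comp_apply, if_neg (not_le.mpr h12)]
    have hmono : MonotoneOn (fun t : ℝ => 2 * t - 1) (Set.Icc (1 / 2) 1) := by
      intro u _ v _ huv
      simp only
      linarith
    rw [he, eVariationOn.comp_eq_of_monotoneOn q.extend _ hmono, himg2]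
    rw [pathLength_eq_pvar]
    rfl
  rw [h1, ← eVar_Icc_add h (by norm_num : (0:ℝ) ≤ 1 / 2) (by norm_num : (1:ℝ)/2 ≤ 1), hp1, hq1]

theorem pathLength_truncateOfLE {x y : X} (δ : Path x y) {t₀ t₁ : ℝ}
    (h0 : 0 ≤ t₀) (h : t₀ ≤ t₁) (h1 : t₁ ≤ 1) :
    pathLength (δ.truncateOfLE h) = pvar δ t₀ t₁ := by
  have hcoe : ⇑(δ.truncateOfLE h) =
      δ.extend ∘ (fun s : unitInterval => min (max (↑s) t₀) t₁) := rfl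
  have hmono : MonotoneOn (fun s : unitInterval => min (max (↑s) t₀) t₁)
      (Set.univ : Set unitInterval) := by
    intro u _ v _ huv
    exact min_le_min (max_le_max (Subtype.coe_le_coe.mpr huv) le_rfl) le_rfl
  unfold pathLength
  rw [hcoe, eVariationOn.comp_eq_of_monotoneOn δ.extend _ hmono]
  unfold pvar
  congr 1
  apply Set.eq_of_subset_of_subset
  · rintro _ ⟨u, -, rfl⟩
    exact ⟨le_min (le_max_right _ _) h, min_le_right _ _⟩
  · rintro v ⟨hv0, hv1⟩
    refine ⟨⟨v, h0.trans hv0, hv1.trans h1⟩, Set.mem_univ _, ?_⟩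
    simp only [max_eq_left hv0, min_eq_left hv1]

theorem homotopic_split {x y : X} (δ : Path x y) {m : ℝ} (hm0 : 0 ≤ m) (hm1 : m ≤ 1) :
    δ.Homotopic (((δ.truncateOfLE hm0).cast δ.extend_zero.symm rfl).trans
      ((δ.truncateOfLE hm1).cast rfl δ.extend_one.symm)) := by
  classical
  set φ : ℝ → ℝ := fun u =>
    if u ≤ 1 / 2 then min (max (2 * u) 0) m else min (max (2 * u - 1) m) 1 with hφ
  have hφcont : Continuous φ := by
    apply Continuous.if_le
    · exact (((continuous_const.mul continuous_id).max continuous_const).min continuous_const)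
    · exact ((((continuous_const.mul continuous_id).sub continuous_const).max
        continuous_const).min continuous_const)
    · exact continuous_id
    · exact continuous_const
    · intro u hu
      subst hu
      norm_num [hm0, hm1]
  have hφmem : ∀ u : ℝ, u ∈ Set.Icc (0:ℝ) 1 → φ u ∈ Set.Icc (0:ℝ) 1 := by
    intro u hu
    by_cases h : u ≤ 1 / 2 <;> simp only [hφ, if_pos, if_neg, h, if_true, if_false]
    · constructor
      · exact le_min (le_max_right _ _) hm0
      · exact le_trans (min_le_right _ _) hm1
    · constructor
      · exact le_min (le_trans hm0 (le_max_right _ _)) zero_le_one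
      · exact min_le_right _ _
  set f : unitInterval → unitInterval := fun s => ⟨φ s, hφmem _ s.2⟩ with hf'
  have hf : Continuous f := (hφcont.comp continuous_subtype_val).subtype_mk _
  have hf0 : f 0 = 0 := by
    apply Subtype.ext
    show φ 0 = 0
    norm_num [hφ, hm0]
  have hf1 : f 1 = 1 := by
    apply Subtype.ext
    show φ 1 = 1
    rw [hφ]
    norm_num [le_max_left]
  have heq : (((δ.truncateOfLE hm0).cast δ.extend_zero.symm rfl).trans
      ((δ.truncateOfLE hm1).cast rfl δ.extend_one.symm)) = δ.reparam f hf hf0 hf1 := by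
    ext s
    rw [Path.trans_apply]
    have hval : (δ.reparam f hf hf0 hf1) s = δ.extend (φ s) := by
      simp only [Path.reparam, Path.coe_mk_mk, Function.comp_apply]
      exact (δ.extend_extends' _).symm
    rw [hval]
    split_ifs with h
    · show δ.extend (min (max (2 * (s : ℝ)) 0) m) = _
      rw [hφ]
      simp only [if_pos h]
    · show δ.extend (min (max (2 * (s : ℝ) - 1) m) 1) = _
      rw [hφ]
      simp only [if_neg h]
  rw [heq]
  exact ⟨Path.Homotopy.reparam δ f hf hf0 hf1⟩

section SmallVar

variable {Y : Type*} [PseudoEMetricSpace Y]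

theorem exists_right_small (f : ℝ → Y) {t b : ℝ} (htb : t < b)
    (hcont : ContinuousWithinAt f (Set.Icc t b) t)
    (hfin : eVariationOn f (Set.Icc t b) ≠ ⊤) {ε : ENNReal} (hε : 0 < ε) :
    ∃ u, t < u ∧ u ≤ b ∧ eVariationOn f (Set.Icc t u) ≤ 2 * ε := by
  classical
  have hev : f ⁻¹' (EMetric.ball (f t) ε) ∈ nhdsWithin t (Set.Icc t b) :=
    hcont (EMetric.ball_mem_nhds _ hε)
  rw [Metric.mem_nhdsWithin_iff] at hev
  obtain ⟨δ, hδ, hδsub⟩ := hev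
  set w := min (t + δ / 2) b with hw
  have htw : t < w := lt_min (by linarith) htb
  have hwb : w ≤ b := min_le_right _ _
  have hsmall : ∀ r ∈ Set.Icc t w, edist (f r) (f t) < ε := by
    intro r hr
    have h1 : r ≤ t + δ / 2 := le_trans hr.2 (min_le_left _ _)
    have h2 : r ∈ Metric.ball t δ ∩ Set.Icc t b := by
      constructor
      · rw [Metric.mem_ball, Real.dist_eq, abs_of_nonneg (by linarith [hr.1])]
        linarith
      · exact ⟨hr.1, le_trans hr.2 hwb⟩
    exact hδsub h2
  by_cases hV : eVariationOn f (Set.Icc t w) ≤ 2 * ε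
  · exact ⟨w, htw, hwb, hV⟩
  push_neg at hV
  set V := eVariationOn f (Set.Icc t w) with hVdef
  have hVfin : V ≠ ⊤ :=
    fun h => hfin (top_le_iff.mp (h ▸ eVariationOn.mono f (Set.Icc_subset_Icc le_rfl hwb)))
  have hVpos : V ≠ 0 := by
    intro h
    rw [h] at hV
    exact (not_lt_of_ge (zero_le)) hV
  have hsub : V - ε < V := ENNReal.sub_lt_self hVfin hVpos (ne_of_gt hε)
  rw [hVdef, eVariationOn] at hsub
  obtain ⟨⟨n, u, hu, us⟩, hsum0⟩ := lt_iSup_iff.mp hsub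
  have hsum : V - ε < ∑ i ∈ Finset.range n, edist (f (u (i + 1))) (f (u i)) := hsum0
  -- prepend t
  set v : ℕ → ℝ := fun i => if i = 0 then t else u (i - 1) with hv
  have hv0 : v 0 = t := rfl
  have hvmem : ∀ i, v i ∈ Set.Icc t w := by
    intro i
    by_cases h : i = 0
    · simp [hv, h, le_of_lt htw]
    · simp only [hv, if_neg h]
      exact us _
  have hvmono : Monotone v := by
    apply monotone_nat_of_le_succ
    intro i
    by_cases h : i = 0
    · subst h
      simp only [hv, if_pos rfl, if_neg one_ne_zero]
      exact (us 0).1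
    · simp only [hv, if_neg h, if_neg (Nat.succ_ne_zero i)]
      exact hu (by omega)
  have hsum2 : V - ε ≤ ∑ i ∈ Finset.range (n + 1), edist (f (v (i + 1))) (f (v i)) := by
    rw [Finset.sum_range_succ']
    refine le_trans (le_of_lt hsum) (le_trans (le_of_eq ?_) (self_le_add_right _ _))
    apply Finset.sum_congr rfl
    intro i _
    simp only [hv, Nat.succ_ne_zero, if_neg, Nat.add_sub_cancel]
    rfl
  -- j : last index with v j ≤ t
  set P : ℕ → Prop := fun i => v i ≤ t with hP
  have hP0 : P 0 := le_of_eq hv0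
  set j := Nat.findGreatest P (n + 1) with hj
  have hPj : P j := Nat.findGreatest_spec (Nat.zero_le _) hP0
  have hjle : j ≤ n + 1 := Nat.findGreatest_le _
  have hvj : v j = t := le_antisymm hPj (hvmem j).1
  have hvzero : ∀ i ≤ j, v i = t := fun i hi =>
    le_antisymm (le_trans (hvmono hi) hPj) (hvmem i).1
  by_cases hcase : j = n + 1
  · exfalso
    have hzero : ∑ i ∈ Finset.range (n + 1), edist (f (v (i + 1))) (f (v i)) = 0 := by
      apply Finset.sum_eq_zero
      intro i hi
      rw [Finset.mem_range] at hi
      rw [hvzero i (by omega), hvzero (i + 1) (by omega), edist_self]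
    rw [hzero] at hsum2
    have : V ≤ ε := by
      rw [← zero_add ε]
      exact tsub_le_iff_right.mp hsum2
    exact absurd (lt_of_lt_of_le hV (le_trans this (le_mul_of_one_le_left (zero_le)
      (by norm_num)))) (lt_irrefl _)
  -- j ≤ n, v (j+1) > t
  have hjn : j < n + 1 := lt_of_le_of_ne hjle hcase
  have hnotP : ¬ P (j + 1) := Nat.findGreatest_is_greatest (Nat.lt_succ_of_le (le_refl j)) hjn
  have hvj1 : t < v (j + 1) := lt_of_not_ge hnotP
  -- split the sum
  have hsplit : ∑ i ∈ Finset.range (n + 1), edist (f (v (i + 1))) (f (v i)) =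
      ∑ i ∈ Finset.Ico j (n + 1), edist (f (v (i + 1))) (f (v i)) := by
    symm
    apply Finset.sum_subset
    · intro i hi
      rw [Finset.mem_Ico] at hi
      exact Finset.mem_range.mpr hi.2
    · intro i hi hni
      rw [Finset.mem_range] at hi
      rw [Finset.mem_Ico, not_and_or, not_le, not_lt] at hni
      have hij : i < j := by omega
      rw [hvzero i (by omega), hvzero (i + 1) (by omega), edist_self]
  have hstep : ∑ i ∈ Finset.Ico j (n + 1), edist (f (v (i + 1))) (f (v i)) =
      edist (f (v (j + 1))) (f (v j)) +
        ∑ i ∈ Finset.Ico (j + 1) (n + 1), edist (f (v (i + 1))) (f (v i)) :=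
    Finset.sum_eq_sum_Ico_succ_bot hjn _
  have htail : ∑ i ∈ Finset.Ico (j + 1) (n + 1), edist (f (v (i + 1))) (f (v i)) ≤
      eVariationOn f (Set.Icc (v (j + 1)) w) := by
    rw [Finset.sum_Ico_eq_sum_range]
    have := eVariationOn.sum_le (f := f) (s := Set.Icc (v (j + 1)) w) (n := n + 1 - (j + 1))
      (u := fun i => v (j + 1 + i))
      (fun a b hab => hvmono (by omega))
      (fun i => ⟨hvmono (by omega), (hvmem _).2⟩)
    exact this
  -- combine
  have hVle : V ≤ 2 * ε + eVariationOn f (Set.Icc (v (j + 1)) w) := by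
    have h1 : V ≤ ∑ i ∈ Finset.range (n + 1), edist (f (v (i + 1))) (f (v i)) + ε :=
      tsub_le_iff_right.mp hsum2
    rw [hsplit, hstep, hvj] at h1
    have h2 : edist (f (v (j + 1))) (f t) ≤ ε := le_of_lt (hsmall _ ⟨le_of_lt hvj1, (hvmem _).2⟩)
    calc V ≤ edist (f (v (j + 1))) (f t) +
          (∑ i ∈ Finset.Ico (j + 1) (n + 1), edist (f (v (i + 1))) (f (v i))) + ε := h1
      _ ≤ ε + eVariationOn f (Set.Icc (v (j + 1)) w) + ε := by
          exact add_le_add (add_le_add h2 htail) le_rfl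
      _ = 2 * ε + eVariationOn f (Set.Icc (v (j + 1)) w) := by ring
  have hadd : eVariationOn f (Set.Icc t (v (j + 1))) + eVariationOn f (Set.Icc (v (j + 1)) w)
      = V := eVar_Icc_add f (le_of_lt hvj1) (hvmem _).2
  have hBfin : eVariationOn f (Set.Icc (v (j + 1)) w) ≠ ⊤ := by
    intro h
    apply hVfin
    rw [← hadd, h, add_top]
  refine ⟨v (j + 1), hvj1, le_trans (hvmem _).2 hwb, ?_⟩
  have := hadd.le.trans hVle
  rwa [ENNReal.add_le_add_iff_right hBfin] at this

theorem exists_left_small (f : ℝ → Y) {a t : ℝ} (hat : a < t)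
    (hcont : ContinuousWithinAt f (Set.Icc a t) t)
    (hfin : eVariationOn f (Set.Icc a t) ≠ ⊤) {ε : ENNReal} (hε : 0 < ε) :
    ∃ u, a ≤ u ∧ u < t ∧ eVariationOn f (Set.Icc u t) ≤ 2 * ε := by
  classical
  have hev : f ⁻¹' (EMetric.ball (f t) ε) ∈ nhdsWithin t (Set.Icc a t) :=
    hcont (EMetric.ball_mem_nhds _ hε)
  rw [Metric.mem_nhdsWithin_iff] at hev
  obtain ⟨δ, hδ, hδsub⟩ := hev
  set w := max (t - δ / 2) a with hw
  have htw : w < t := max_lt (by linarith) hat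
  have hwa : a ≤ w := le_max_right _ _
  have hsmall : ∀ r ∈ Set.Icc w t, edist (f r) (f t) < ε := by
    intro r hr
    have h1 : t - δ / 2 ≤ r := le_trans (le_max_left _ _) hr.1
    have h2 : r ∈ Metric.ball t δ ∩ Set.Icc a t := by
      constructor
      · rw [Metric.mem_ball, Real.dist_eq, abs_of_nonpos (by linarith [hr.2])]
        linarith
      · exact ⟨le_trans hwa hr.1, hr.2⟩
    exact hδsub h2
  by_cases hV : eVariationOn f (Set.Icc w t) ≤ 2 * ε
  · exact ⟨w, hwa, htw, hV⟩
  push_neg at hV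
  set V := eVariationOn f (Set.Icc w t) with hVdef
  have hVfin : V ≠ ⊤ :=
    fun h => hfin (top_le_iff.mp (h ▸ eVariationOn.mono f (Set.Icc_subset_Icc hwa le_rfl)))
  have hVpos : V ≠ 0 := by
    intro h
    rw [h] at hV
    exact (not_lt_of_ge (zero_le)) hV
  have hsub : V - ε < V := ENNReal.sub_lt_self hVfin hVpos (ne_of_gt hε)
  rw [hVdef, eVariationOn] at hsub
  obtain ⟨⟨n, u, hu, us⟩, hsum0⟩ := lt_iSup_iff.mp hsub
  have hsum : V - ε < ∑ i ∈ Finset.range n, edist (f (u (i + 1))) (f (u i)) := hsum0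
  -- append t
  set v : ℕ → ℝ := fun i => if i ≤ n then u i else t with hv
  have hvmem : ∀ i, v i ∈ Set.Icc w t := by
    intro i
    by_cases h : i ≤ n
    · simp only [hv, if_pos h]
      exact us _
    · simp only [hv, if_neg h]
      exact ⟨le_of_lt htw, le_rfl⟩
  have hvmono : Monotone v := by
    apply monotone_nat_of_le_succ
    intro i
    by_cases h : i + 1 ≤ n
    · simp only [hv, if_pos h, if_pos (by omega : i ≤ n)]
      exact hu (by omega)
    · by_cases h' : i ≤ n
      · simp only [hv, if_pos h', if_neg h]
        exact (us i).2
      · simp only [hv, if_neg h, if_neg h']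
        exact le_rfl
  have hvtop : v (n + 1) = t := by simp [hv]
  have hsum2 : V - ε ≤ ∑ i ∈ Finset.range (n + 1), edist (f (v (i + 1))) (f (v i)) := by
    rw [Finset.sum_range_succ]
    refine le_trans (le_of_lt hsum) (le_trans (le_of_eq ?_) (self_le_add_right _ _))
    apply Finset.sum_congr rfl
    intro i hi
    rw [Finset.mem_range] at hi
    simp only [hv, if_pos (by omega : i ≤ n), if_pos (by omega : i + 1 ≤ n)]
  have hex : ∃ i, t ≤ v i := ⟨n + 1, le_of_eq hvtop.symm⟩
  set j := Nat.find hex with hj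
  have hPj : t ≤ v j := Nat.find_spec hex
  have hvj : v j = t := le_antisymm (hvmem j).2 hPj
  have hjle : j ≤ n + 1 := Nat.find_le (le_of_eq hvtop.symm)
  have hvtail : ∀ i, j ≤ i → v i = t := fun i hi =>
    le_antisymm (hvmem i).2 (le_trans hPj (hvmono hi))
  by_cases hcase : j = 0
  · exfalso
    have hzero : ∑ i ∈ Finset.range (n + 1), edist (f (v (i + 1))) (f (v i)) = 0 := by
      apply Finset.sum_eq_zero
      intro i _
      rw [hvtail i (by omega), hvtail (i + 1) (by omega), edist_self]
    rw [hzero] at hsum2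
    have h1 : V ≤ ε := by
      rw [← zero_add ε]
      exact tsub_le_iff_right.mp hsum2
    exact absurd (lt_of_lt_of_le hV (le_trans h1 (le_mul_of_one_le_left (zero_le)
      (by norm_num)))) (lt_irrefl _)
  set k := j - 1 with hk
  have hjk : j = k + 1 := by omega
  have hvk : v k < t := lt_of_not_ge (Nat.find_min hex (by omega))
  have hsplit : ∑ i ∈ Finset.range (n + 1), edist (f (v (i + 1))) (f (v i)) =
      ∑ i ∈ Finset.range j, edist (f (v (i + 1))) (f (v i)) := by
    symm
    apply Finset.sum_subset
    · intro i hi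
      rw [Finset.mem_range] at hi ⊢
      omega
    · intro i hi hni
      rw [Finset.mem_range] at hi hni
      rw [hvtail i (by omega), hvtail (i + 1) (by omega), edist_self]
  have hstep : ∑ i ∈ Finset.range j, edist (f (v (i + 1))) (f (v i)) =
      ∑ i ∈ Finset.range k, edist (f (v (i + 1))) (f (v i)) +
        edist (f (v (k + 1))) (f (v k)) := by
    rw [hjk, Finset.sum_range_succ]
  have htail : ∑ i ∈ Finset.range k, edist (f (v (i + 1))) (f (v i)) ≤
      eVariationOn f (Set.Icc w (v k)) := by
    have hcong : ∑ i ∈ Finset.range k, edist (f (v (i + 1))) (f (v i)) =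
        ∑ i ∈ Finset.range k, edist (f (v (min (i + 1) k))) (f (v (min i k))) := by
      apply Finset.sum_congr rfl
      intro i hi
      rw [Finset.mem_range] at hi
      rw [min_eq_left (by omega : i + 1 ≤ k), min_eq_left (by omega : i ≤ k)]
    rw [hcong]
    exact eVariationOn.sum_le (f := f) (s := Set.Icc w (v k)) (n := k) (u := fun i => v (min i k))
      (fun a b hab => hvmono (by omega))
      (fun i => ⟨(hvmem _).1, hvmono (min_le_right _ _)⟩)
  have hVle : V ≤ eVariationOn f (Set.Icc w (v k)) + 2 * ε := by
    have h1 : V ≤ ∑ i ∈ Finset.range (n + 1), edist (f (v (i + 1))) (f (v i)) + ε :=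
      tsub_le_iff_right.mp hsum2
    rw [hsplit, hstep] at h1
    have h2 : edist (f (v (k + 1))) (f (v k)) ≤ ε := by
      rw [← hjk, hvj, edist_comm]
      exact le_of_lt (hsmall _ ⟨(hvmem _).1, le_of_lt hvk⟩)
    calc V ≤ ∑ i ∈ Finset.range k, edist (f (v (i + 1))) (f (v i)) +
          edist (f (v (k + 1))) (f (v k)) + ε := h1
      _ ≤ eVariationOn f (Set.Icc w (v k)) + ε + ε := add_le_add (add_le_add htail h2) le_rfl
      _ = eVariationOn f (Set.Icc w (v k)) + 2 * ε := by ring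
  have hadd : eVariationOn f (Set.Icc w (v k)) + eVariationOn f (Set.Icc (v k) t)
      = V := eVar_Icc_add f (hvmem _).1 (le_of_lt hvk)
  have hAfin : eVariationOn f (Set.Icc w (v k)) ≠ ⊤ := by
    intro h
    apply hVfin
    rw [← hadd, h, top_add]
  refine ⟨v k, le_trans hwa (hvmem _).1, hvk, ?_⟩
  have h3 := hadd.le.trans hVle
  rwa [ENNReal.add_le_add_iff_left hAfin] at h3

end SmallVar

theorem exists_splitPoint {x y : X} (δ : Path x y) {ℓ : ENNReal} (hℓ : 0 < ℓ)
    (hℓtop : ℓ ≠ ⊤) (hfin : pvar δ 0 1 ≠ ⊤) :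
    ∃ m, 0 ≤ m ∧ m ≤ 1 ∧ pvar δ 0 m ≤ ℓ ∧
      (pvar δ m 1 + ℓ ≤ pvar δ 0 1 ∨ pvar δ m 1 = 0) := by
  classical
  by_cases hA : pvar δ 0 1 ≤ ℓ
  · exact ⟨1, zero_le_one, le_rfl, hA, Or.inr (pvar_self δ 1)⟩
  set S : Set ℝ := {r | r ∈ Set.Icc (0:ℝ) 1 ∧ pvar δ 0 r ≤ ℓ} with hS
  have h0S : (0:ℝ) ∈ S := ⟨⟨le_rfl, zero_le_one⟩, by rw [pvar_self]; exact zero_le⟩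
  have hSne : S.Nonempty := ⟨0, h0S⟩
  have hSbdd : BddAbove S := ⟨1, fun r hr => hr.1.2⟩
  set m := sSup S with hm
  have hm0 : 0 ≤ m := le_csSup hSbdd h0S
  have hm1 : m ≤ 1 := csSup_le hSne (fun r hr => hr.1.2)
  have hfin' : ∀ a b : ℝ, 0 ≤ a → b ≤ 1 → eVariationOn δ.extend (Set.Icc a b) ≠ ⊤ := by
    intro a b ha hb h
    exact hfin (top_le_iff.mp (h ▸ eVariationOn.mono δ.extend (Set.Icc_subset_Icc ha hb)))
  have hi : pvar δ 0 m ≤ ℓ := by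
    rcases eq_or_lt_of_le hm0 with h | h
    · rw [← h, pvar_self]
      exact zero_le
    apply ENNReal.le_of_forall_pos_le_add
    intro ε hε _
    obtain ⟨u, hu0, hum, huv⟩ := exists_left_small δ.extend h
      (δ.continuous_extend.continuousWithinAt) (hfin' 0 m le_rfl hm1)
      (ε := (ε : ENNReal) / 2)
      (by simp [ENNReal.div_pos_iff, hε.ne'])
    obtain ⟨r, hrS, hur⟩ := exists_lt_of_lt_csSup hSne hum
    have hrm : r ≤ m := le_csSup hSbdd hrS
    have hsplit : pvar δ 0 r + pvar δ r m = pvar δ 0 m :=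
      pvar_add δ hrS.1.1 hrm
    have h2 : pvar δ r m ≤ (ε : ENNReal) := by
      have : pvar δ r m ≤ eVariationOn δ.extend (Set.Icc u m) :=
        eVariationOn.mono _ (Set.Icc_subset_Icc (le_of_lt hur) le_rfl)
      refine le_trans (le_trans this huv) (le_of_eq ?_)
      rw [ENNReal.mul_div_cancel' (by norm_num) (by norm_num)]
    calc pvar δ 0 m = pvar δ 0 r + pvar δ r m := hsplit.symm
      _ ≤ ℓ + ε := add_le_add hrS.2 h2
  refine ⟨m, hm0, hm1, hi, ?_⟩
  rcases eq_or_lt_of_le hm1 with h1 | h1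
  · exact absurd (h1 ▸ hi) hA
  left
  have hkey : ℓ ≤ pvar δ 0 m := by
    apply ENNReal.le_of_forall_pos_le_add
    intro ε hε _
    obtain ⟨u, hmu, hu1, huv⟩ := exists_right_small δ.extend h1
      (δ.continuous_extend.continuousWithinAt) (hfin' m 1 hm0 le_rfl)
      (ε := (ε : ENNReal) / 2)
      (by simp [ENNReal.div_pos_iff, hε.ne'])
    have huS : u ∉ S := fun hu => absurd (le_csSup hSbdd hu) (not_le.mpr hmu)
    have huℓ : ℓ < pvar δ 0 u := by
      by_contra hcon
      exact huS ⟨⟨le_trans hm0 (le_of_lt hmu), hu1⟩, not_lt.mp hcon⟩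
    have hsplit : pvar δ 0 m + pvar δ m u = pvar δ 0 u := pvar_add δ hm0 (le_of_lt hmu)
    have h2 : pvar δ m u ≤ (ε : ENNReal) := by
      refine le_trans huv (le_of_eq ?_)
      rw [ENNReal.mul_div_cancel' (by norm_num) (by norm_num)]
    calc ℓ ≤ pvar δ 0 u := le_of_lt huℓ
      _ = pvar δ 0 m + pvar δ m u := hsplit.symm
      _ ≤ pvar δ 0 m + ε := add_le_add le_rfl h2
  have hsplit : pvar δ 0 m + pvar δ m 1 = pvar δ 0 1 := pvar_add δ hm0 hm1
  calc pvar δ m 1 + ℓ ≤ pvar δ m 1 + pvar δ 0 m := add_le_add le_rfl hkey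
    _ = pvar δ 0 1 := by rw [add_comm, hsplit]

section Groupoid

open CategoryTheory

variable {Y : Type*} [MetricSpace Y]

/-- The class of a path as an arrow in the fundamental groupoid. -/
noncomputable def arr {a b : Y} (δ : Path a b) :
    FundamentalGroupoid.mk a ⟶ FundamentalGroupoid.mk b := ⟦δ⟧

theorem arr_trans {a b c : Y} (δ₁ : Path a b) (δ₂ : Path b c) :
    arr (δ₁.trans δ₂) = arr δ₁ ≫ arr δ₂ := by
  rw [FundamentalGroupoid.comp_eq]
  exact Path.Homotopic.Quotient.mk_trans δ₁ δ₂

theorem arr_eq_of_homotopic {a b : Y} {δ₁ δ₂ : Path a b} (h : δ₁.Homotopic δ₂) :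
    arr δ₁ = arr δ₂ := Quotient.sound h

/-- chain of geodesics along a sequence of points -/
noncomputable def chain (g : ∀ a b : Y, Path a b) :
    ∀ (n : ℕ) (c : ℕ → Y), (FundamentalGroupoid.mk (c 0) ⟶ FundamentalGroupoid.mk (c n))
  | 0, _ => 𝟙 _
  | (n + 1), c => arr (g (c 0) (c 1)) ≫ chain g n (fun i => c (i + 1))

theorem comp_eq_id_right {a b : Y} (u : FundamentalGroupoid.mk a ⟶ FundamentalGroupoid.mk b)
    (w : FundamentalGroupoid.mk b ⟶ FundamentalGroupoid.mk a)
    (h : u ≫ w = 𝟙 _) : w = Groupoid.inv u := by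
  rw [← Category.id_comp w, ← Groupoid.inv_comp u, Category.assoc, h, Category.comp_id]

theorem dist_le_of_pathLength {a b : Y} {δ : Path a b} {B : ℝ} (hB : 0 ≤ B)
    (h : pathLength δ ≤ ENNReal.ofReal B) : dist a b ≤ B := by
  rw [← edist_le_ofReal hB]
  have h1 : edist (δ.extend 1) (δ.extend 0) ≤ pvar δ 0 1 := edist_le_pvar δ zero_le_one
  rw [δ.extend_zero, δ.extend_one, ← pathLength_eq_pvar] at h1
  rw [edist_comm]
  exact le_trans h1 h

variable (g : ∀ a b : Y, Path a b) {s : ℝ}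
variable (hsloop : ∀ (z : Y) (γ : Path z z), pathLength γ < ENNReal.ofReal s →
    γ.Homotopic (Path.refl z))
variable (hglen : ∀ a b : Y, pathLength (g a b) = ENNReal.ofReal (dist a b))

include hsloop in
theorem arr_loop_short {z : Y} (γ : Path z z) (h : pathLength γ < ENNReal.ofReal s) :
    arr γ = 𝟙 (FundamentalGroupoid.mk z) := by
  rw [FundamentalGroupoid.id_eq_path_refl]
  exact Quotient.sound (hsloop z γ h)

include hsloop hglen in
theorem geo_comp_geo {p q : Y} (h : 2 * dist p q < s) :
    arr (g p q) ≫ arr (g q p) = 𝟙 (FundamentalGroupoid.mk p) := by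
  rw [← arr_trans]
  apply arr_loop_short hsloop
  rw [pathLength_trans, hglen, hglen, ← ENNReal.ofReal_add dist_nonneg dist_nonneg]
  have h2 : dist p q + dist q p = 2 * dist p q := by rw [dist_comm q p]; ring
  rw [h2]
  exact (ENNReal.ofReal_lt_ofReal_iff (lt_of_le_of_lt (by positivity) h)).mpr h

include hsloop hglen in
theorem piece_eq {x y p q : Y} (δ : Path x y) {D B : ℝ} (hD : 0 ≤ D) (hB : 0 ≤ B)
    (hxp : dist x p ≤ D) (hyq : dist y q ≤ D) (hδ : pathLength δ ≤ ENNReal.ofReal B)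
    (harith : 4 * D + 2 * B < s) :
    arr (g p x) ≫ arr δ ≫ arr (g y q) = arr (g p q) := by
  have hxy : dist x y ≤ B := dist_le_of_pathLength hB hδ
  have hpq : dist q p ≤ 2 * D + B := by
    calc dist q p ≤ dist q y + dist y x + dist x p := dist_triangle4 q y x p
      _ ≤ D + B + D := by
          refine add_le_add (add_le_add ?_ ?_) hxp
          · rw [dist_comm]; exact hyq
          · rw [dist_comm]; exact hxy
      _ = 2 * D + B := by ring
  set A : Path p q := (g p x).trans (δ.trans (g y q)) with hA
  have hlenA : pathLength A ≤ ENNReal.ofReal (2 * D + B) := by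
    rw [hA, pathLength_trans, pathLength_trans, hglen, hglen]
    calc ENNReal.ofReal (dist p x) + (pathLength δ + ENNReal.ofReal (dist y q))
        ≤ ENNReal.ofReal D + (ENNReal.ofReal B + ENNReal.ofReal D) := by
          refine add_le_add ?_ (add_le_add hδ ?_)
          · exact ENNReal.ofReal_le_ofReal (by rw [dist_comm]; exact hxp)
          · exact ENNReal.ofReal_le_ofReal hyq
      _ = ENNReal.ofReal (2 * D + B) := by
          rw [← ENNReal.ofReal_add hB hD, ← ENNReal.ofReal_add hD (by positivity)]
          ring_nf
  have h1 : arr (g q p) ≫ arr A = 𝟙 (FundamentalGroupoid.mk q) := by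
    rw [← arr_trans]
    apply arr_loop_short hsloop
    rw [pathLength_trans, hglen]
    calc ENNReal.ofReal (dist q p) + pathLength A
        ≤ ENNReal.ofReal (2 * D + B) + ENNReal.ofReal (2 * D + B) :=
          add_le_add (ENNReal.ofReal_le_ofReal hpq) hlenA
      _ = ENNReal.ofReal (4 * D + 2 * B) := by
          rw [← ENNReal.ofReal_add (by positivity) (by positivity)]
          ring_nf
      _ < ENNReal.ofReal s :=
          (ENNReal.ofReal_lt_ofReal_iff (lt_of_le_of_lt (by positivity) harith)).mpr harith
  have h2 : arr (g q p) ≫ arr (g p q) = 𝟙 (FundamentalGroupoid.mk q) := by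
    apply geo_comp_geo g hsloop hglen
    calc 2 * dist q p ≤ 2 * (2 * D + B) := by linarith
      _ = 4 * D + 2 * B := by ring
      _ < s := harith
  have h3 := comp_eq_id_right _ _ h1
  have h4 := comp_eq_id_right _ _ h2
  rw [← arr_trans, ← arr_trans, ← hA, h3, h4]

theorem conj_recover {P Q R S : FundamentalGroupoid Y} (u : P ⟶ Q) (w : Q ⟶ R) (v : R ⟶ S) :
    Groupoid.inv u ≫ (u ≫ w ≫ v) ≫ Groupoid.inv v = w := by
  simp

end Groupoid

section Decomp

open CategoryTheory

variable {Y : Type*} [MetricSpace Y]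
variable (g : ∀ a b : Y, Path a b) {s : ℝ}
variable (hsloop : ∀ (z : Y) (γ : Path z z), pathLength γ < ENNReal.ofReal s →
    γ.Homotopic (Path.refl z))
variable (hglen : ∀ a b : Y, pathLength (g a b) = ENNReal.ofReal (dist a b))
variable (sn : Y → Y) {D B : ℝ}
variable (hsn : ∀ z, dist z (sn z) ≤ D)
variable (hD : 0 ≤ D) (hB : 0 < B) (harith : 4 * D + 2 * B < s)

include hsloop hglen hsn hD hB harith in
theorem decomp : ∀ (n : ℕ) (x y : Y) (δ : Path x y),
    pathLength δ ≤ (n + 1 : ℕ) * ENNReal.ofReal B →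
    ∃ c : ℕ → Y, (∀ i, c i ∈ Set.range sn) ∧ (∀ i, n ≤ i → c i = c n) ∧
      arr (g (sn x) x) ≫ arr δ ≫ arr (g y (sn y)) =
        arr (g (sn x) (c 0)) ≫ chain g n c ≫ arr (g (c n) (sn y)) := by
  have hs : 0 < s := lt_of_le_of_lt (by positivity) harith
  have hgid : ∀ p : Y, arr (g p p) = 𝟙 (FundamentalGroupoid.mk p) := by
    intro p
    apply arr_loop_short hsloop
    rw [hglen, dist_self, ENNReal.ofReal_zero]
    exact ENNReal.ofReal_pos.mpr hs
  intro n
  induction n with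
  | zero =>
    intro x y δ hδ
    refine ⟨fun _ => sn y, fun _ => ⟨y, rfl⟩, fun _ _ => rfl, ?_⟩
    have hp : arr (g (sn x) x) ≫ arr δ ≫ arr (g y (sn y)) = arr (g (sn x) (sn y)) :=
      piece_eq g hsloop hglen δ hD hB.le (hsn x) (hsn y)
        (by simpa using hδ) harith
    rw [hp]
    show arr (g (sn x) (sn y)) = arr (g (sn x) (sn y)) ≫ 𝟙 _ ≫ arr (g (sn y) (sn y))
    rw [hgid, Category.id_comp, Category.comp_id]
  | succ n IH =>
    intro x y δ hδ
    have hfin : pvar δ 0 1 ≠ ⊤ := by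
      rw [← pathLength_eq_pvar]
      exact ne_top_of_le_ne_top (ENNReal.mul_ne_top (by simp) ENNReal.ofReal_ne_top) hδ
    obtain ⟨m, hm0, hm1, h0m, hrest⟩ := exists_splitPoint δ (ℓ := ENNReal.ofReal B)
      (ENNReal.ofReal_pos.mpr hB) ENNReal.ofReal_ne_top hfin
    set z := δ.extend m with hz
    set δ₁ : Path x z := (δ.truncateOfLE hm0).cast δ.extend_zero.symm rfl with hδ₁
    set δ₂ : Path z y := (δ.truncateOfLE hm1).cast rfl δ.extend_one.symm with hδ₂
    have hlen1 : pathLength δ₁ = pvar δ 0 m := by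
      rw [hδ₁, pathLength_cast, pathLength_truncateOfLE δ le_rfl hm0 hm1]
    have hlen2 : pathLength δ₂ = pvar δ m 1 := by
      rw [hδ₂, pathLength_cast, pathLength_truncateOfLE δ hm0 hm1 le_rfl]
    have hδ1B : pathLength δ₁ ≤ ENNReal.ofReal B := by rw [hlen1]; exact h0m
    have hδ2B : pathLength δ₂ ≤ (n + 1 : ℕ) * ENNReal.ofReal B := by
      rw [hlen2]
      rcases hrest with h | h
      · have hcast : ((n + 1 + 1 : ℕ) : ENNReal) * ENNReal.ofReal B
            = (n + 1 : ℕ) * ENNReal.ofReal B + ENNReal.ofReal B := by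
          push_cast
          ring
        have h2 : pvar δ m 1 + ENNReal.ofReal B ≤
            (n + 1 : ℕ) * ENNReal.ofReal B + ENNReal.ofReal B := by
          refine le_trans h (le_trans ?_ hcast.le)
          rw [← pathLength_eq_pvar]
          exact hδ
        rwa [ENNReal.add_le_add_iff_right ENNReal.ofReal_ne_top] at h2
      · rw [h]
        exact zero_le
    obtain ⟨c', hc'mem, hc'pad, hIH⟩ := IH z y δ₂ hδ2B
    set c : ℕ → Y := fun i => Nat.casesOn i (sn z) c' with hc
    refine ⟨c, ?_, ?_, ?_⟩
    · intro i
      cases i with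
      | zero => exact ⟨z, rfl⟩
      | succ j => exact hc'mem j
    · intro i hi
      obtain ⟨j, rfl⟩ := Nat.exists_eq_add_of_le hi
      cases j with
      | zero => rfl
      | succ k =>
        show c' (n + 1 + k) = c' n
        exact hc'pad _ (by omega)
    · have harrδ : arr δ = arr δ₁ ≫ arr δ₂ := by
        rw [← arr_trans]
        exact arr_eq_of_homotopic (homotopic_split δ hm0 hm1)
      have hpiece : arr (g (sn x) x) ≫ arr δ₁ ≫ arr (g z (sn z)) = arr (g (sn x) (sn z)) :=
        piece_eq g hsloop hglen δ₁ hD hB.le (hsn x) (hsn z)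
          hδ1B harith
      have hid : arr (g z (sn z)) ≫ arr (g (sn z) z) = 𝟙 (FundamentalGroupoid.mk z) := by
        apply geo_comp_geo g hsloop hglen
        have := hsn z
        linarith
      have hcancel : ∀ (w : FundamentalGroupoid Y) (W : FundamentalGroupoid.mk z ⟶ w),
          arr (g z (sn z)) ≫ arr (g (sn z) z) ≫ W = W := by
        intro w W
        rw [← Category.assoc, hid, Category.id_comp]
      calc arr (g (sn x) x) ≫ arr δ ≫ arr (g y (sn y))
          = arr (g (sn x) x) ≫ arr δ₁ ≫ arr δ₂ ≫ arr (g y (sn y)) := by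
            rw [harrδ]
            simp only [Category.assoc]
        _ = arr (g (sn x) x) ≫ arr δ₁ ≫ arr (g z (sn z)) ≫ arr (g (sn z) z) ≫
              arr δ₂ ≫ arr (g y (sn y)) := by rw [hcancel]
        _ = (arr (g (sn x) x) ≫ arr δ₁ ≫ arr (g z (sn z))) ≫ arr (g (sn z) z) ≫
              arr δ₂ ≫ arr (g y (sn y)) := by simp only [Category.assoc]
        _ = arr (g (sn x) (sn z)) ≫ arr (g (sn z) z) ≫ arr δ₂ ≫ arr (g y (sn y)) := by
            rw [hpiece]
        _ = arr (g (sn x) (sn z)) ≫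
              arr (g (sn z) (c' 0)) ≫ chain g n c' ≫ arr (g (c' n) (sn y)) := by rw [hIH]
        _ = arr (g (sn x) (c 0)) ≫ chain g (n + 1) c ≫ arr (g (c (n + 1)) (sn y)) := by
            show _ = arr (g (sn x) (sn z)) ≫
              (arr (g (sn z) (c' 0)) ≫ chain g n c') ≫ arr (g (c' n) (sn y))
            simp only [Category.assoc]

end Decomp

section Net

variable {Y : Type*} [MetricSpace Y] [MeasurableSpace Y] [BorelSpace Y]

theorem sep_card_bound (μ : Measure Y) {r v : ℝ} (hr : 0 < r) (hv : 0 < v)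
    (hball : ∀ z : Y, ENNReal.ofReal v ≤ μ (closedBall z r))
    (F : Finset Y) (hsep : ∀ p ∈ F, ∀ q ∈ F, p ≠ q → 2 * r < dist p q) :
    (F.card : ENNReal) * ENNReal.ofReal v ≤ μ Set.univ := by
  have hdisj : (↑F : Set Y).PairwiseDisjoint (fun p => closedBall p r) := by
    intro p hp q hq hpq
    apply closedBall_disjoint_closedBall
    have := hsep p hp q hq hpq
    linarith
  have hmeas : ∀ p ∈ F, MeasurableSet (closedBall p r) :=
    fun p _ => measurableSet_closedBall
  have h1 : ∑ p ∈ F, μ (closedBall p r) = μ (⋃ p ∈ F, closedBall p r) :=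
    (measure_biUnion_finset hdisj hmeas).symm
  calc (F.card : ENNReal) * ENNReal.ofReal v = ∑ _p ∈ F, ENNReal.ofReal v := by
        rw [Finset.sum_const, nsmul_eq_mul]
    _ ≤ ∑ p ∈ F, μ (closedBall p r) := Finset.sum_le_sum (fun p _ => hball p)
    _ = μ (⋃ p ∈ F, closedBall p r) := h1
    _ ≤ μ Set.univ := measure_mono (Set.subset_univ _)

theorem exists_net (μ : Measure Y) (hμfin : μ Set.univ < ⊤) {r v : ℝ}
    (hr : 0 < r) (hv : 0 < v)
    (hball : ∀ z : Y, ENNReal.ofReal v ≤ μ (closedBall z r)) :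
    ∃ F : Finset Y, ((F.card : ENNReal) * ENNReal.ofReal v ≤ μ Set.univ) ∧
      ∀ z : Y, ∃ p ∈ F, dist z p ≤ 2 * r := by
  classical
  set M : ℝ := (μ Set.univ).toReal / v with hM
  set K : Set ℕ := {k | ∃ F : Finset Y,
    (∀ p ∈ F, ∀ q ∈ F, p ≠ q → 2 * r < dist p q) ∧ F.card = k} with hK
  have h0K : 0 ∈ K := ⟨∅, by simp⟩
  have hKbdd : ∀ k ∈ K, k ≤ Nat.floor M := by
    rintro k ⟨F, hsep, rfl⟩
    have h1 := sep_card_bound μ hr hv hball F hsep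
    apply Nat.le_floor
    rw [hM, le_div_iff₀ hv]
    have h2 : ENNReal.ofReal ((F.card : ℝ) * v) ≤ μ Set.univ := by
      rw [ENNReal.ofReal_mul (by positivity)]
      simpa [ENNReal.ofReal_natCast] using h1
    calc (F.card : ℝ) * v = (ENNReal.ofReal ((F.card : ℝ) * v)).toReal := by
          rw [ENNReal.toReal_ofReal (by positivity)]
      _ ≤ (μ Set.univ).toReal := ENNReal.toReal_mono hμfin.ne h2
  have hKfin : K.Finite := Set.Finite.subset (Set.finite_Iic (Nat.floor M)) hKbdd
  obtain ⟨k₀, hk₀K, hk₀max⟩ := hKfin.exists_maximalFor id K ⟨0, h0K⟩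
  obtain ⟨F, hsep, hcard⟩ := hk₀K
  refine ⟨F, sep_card_bound μ hr hv hball F hsep, ?_⟩
  intro z
  by_contra hcon
  push_neg at hcon
  have hzF : z ∉ F := by
    intro h
    have h2 := hcon z h
    rw [dist_self] at h2
    linarith
  have hsep' : ∀ p ∈ insert z F, ∀ q ∈ insert z F, p ≠ q → 2 * r < dist p q := by
    intro p hp q hq hpq
    rcases Finset.mem_insert.mp hp with rfl | hp' <;>
      rcases Finset.mem_insert.mp hq with rfl | hq'
    · exact absurd rfl hpq
    · exact hcon q hq'
    · exact lt_of_lt_of_le (hcon p hp') (le_of_eq (dist_comm _ p))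
    · exact hsep p hp' q hq' hpq
  have hmem : F.card + 1 ∈ K := ⟨insert z F, hsep', by rw [Finset.card_insert_of_notMem hzF]⟩
  have h3 := hk₀max hmem (by simp only [id]; omega)
  simp only [id] at h3
  omega

end Net

end EntropyAux


open EntropyAux CategoryTheory in
theorem entropy_bound_extremal_surface
    {X : Type*} [MetricSpace X] [CompactSpace X]
    [MeasurableSpace X] [BorelSpace X]
    (hgeo : IsGeodesicSpace X) (x₀ : X) (μ : Measure X)
    (hμpos : 0 < μ Set.univ) (hμfin : μ Set.univ < ⊤)
    (s : ℝ) (hs : 0 < s)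
    (hsys : ∀ (x : X) (γ : Path x x), pathLength γ < ENNReal.ofReal s →
      γ.Homotopic (Path.refl x))
    (hball : ∀ (x : X) (r : ℝ), 0 < r → r ≤ s / 2 →
      ENNReal.ofReal (2 * r ^ 2) ≤ μ (closedBall x r))
    (P' : ℝ → ℕ)
    (hP' : ∀ T : ℝ, 0 < T → P' T =
      {g : FundamentalGroup X x₀ | ∃ γ : Path x₀ x₀,
        FundamentalGroup.fromLoop ⟦γ⟧ = g ∧ pathLength γ ≤ ENNReal.ofReal T}.ncard)
    (α β : ℝ) (hα : 0 < α) (hβ : 0 < β) (hαβ : 4 * α + β < 1 / 2) :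
    limsup (fun T : ℝ => Real.log (P' T) / T) atTop ≤
      (1 / (β * s)) * Real.log ((μ Set.univ).toReal / (2 * α ^ 2 * s ^ 2)) := by
  classical
  have hα8 : α < 1 / 8 := by linarith
  set r : ℝ := α * s with hr
  have hrpos : 0 < r := by positivity
  set v : ℝ := 2 * r ^ 2 with hv
  have hvpos : 0 < v := by positivity
  have hballv : ∀ z : X, ENNReal.ofReal v ≤ μ (closedBall z r) := by
    intro z
    exact hball z r hrpos (by rw [hr]; nlinarith)
  obtain ⟨F, hFcard, hFcover⟩ := exists_net μ hμfin hrpos hvpos hballv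
  set sn : X → X := fun z => (hFcover z).choose with hsn'
  have hsnF : ∀ z, sn z ∈ F := fun z => (hFcover z).choose_spec.1
  have hsn : ∀ z, dist z (sn z) ≤ 2 * r := fun z => (hFcover z).choose_spec.2
  set g : ∀ a b : X, Path a b := fun a b => (hgeo a b).choose with hg'
  have hglen : ∀ a b : X, pathLength (g a b) = ENNReal.ofReal (dist a b) :=
    fun a b => (hgeo a b).choose_spec
  set B : ℝ := β * s with hB
  have hBpos : 0 < B := by positivity
  have hD : (0:ℝ) ≤ 2 * r := by positivity
  have harith : 4 * (2 * r) + 2 * B < s := by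
    rw [hr, hB]
    nlinarith
  set p₀ : X := sn x₀ with hp₀
  set N : ℕ := F.card with hN
  have hN1 : 1 ≤ N := Finset.card_pos.mpr ⟨p₀, hsnF x₀⟩
  -- counting bound
  have hcount : ∀ (n : ℕ) (T : ℝ), 0 < T → T ≤ ((n:ℝ) + 1) * B → P' T ≤ N ^ (n + 1) := by
    intro n T hT hTn
    rw [hP' T hT]
    set A : Set (FundamentalGroup X x₀) := {gp : FundamentalGroup X x₀ | ∃ γ : Path x₀ x₀,
      FundamentalGroup.fromLoop ⟦γ⟧ = gp ∧ pathLength γ ≤ ENNReal.ofReal T} with hA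
    set ext : (Fin (n + 1) → {w // w ∈ F}) → (ℕ → X) :=
      fun cf i => (cf ⟨min i n, by omega⟩ : X) with hext'
    set recover : (Fin (n + 1) → {w // w ∈ F}) →
        (FundamentalGroupoid.mk x₀ ⟶ FundamentalGroupoid.mk x₀) :=
      fun cf => Groupoid.inv (arr (g p₀ x₀)) ≫
        (arr (g p₀ (ext cf 0)) ≫ chain g n (ext cf) ≫ arr (g (ext cf n) p₀)) ≫
          Groupoid.inv (arr (g x₀ p₀)) with hrecover
    have hrep : ∀ a ∈ A, ∃ cf : Fin (n + 1) → {w // w ∈ F},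
        a = FundamentalGroup.fromLoop (recover cf) := by
      intro a ha
      obtain ⟨γ, hγa, hγlen⟩ := ha
      have hcast : ENNReal.ofReal (((n:ℝ) + 1) * B) = (n + 1 : ℕ) * ENNReal.ofReal B := by
        rw [ENNReal.ofReal_mul (by positivity)]
        congr 1
        rw [show ((n:ℝ) + 1) = ((n + 1 : ℕ) : ℝ) by push_cast; ring, ENNReal.ofReal_natCast]
      have hlen' : pathLength γ ≤ (n + 1 : ℕ) * ENNReal.ofReal B := by
        rw [← hcast]
        exact le_trans hγlen (ENNReal.ofReal_le_ofReal hTn)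
      obtain ⟨c, hcmem, hcpad, hdec⟩ :=
        decomp g hsys hglen sn hsn hD hBpos harith n x₀ x₀ γ hlen'
      rw [← hp₀] at hdec
      have hcF : ∀ i, c i ∈ F := by
        intro i
        obtain ⟨w, hw⟩ := hcmem i
        rw [← hw]
        exact hsnF w
      set cf : Fin (n + 1) → {w // w ∈ F} := fun i => ⟨c i, hcF i⟩ with hcf
      have hextc : ext cf = c := by
        funext i
        show c (min i n) = c i
        rcases le_or_gt i n with h | h
        · rw [min_eq_left h]
        · rw [min_eq_right h.le]
          exact (hcpad i h.le).symm
      refine ⟨cf, ?_⟩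
      rw [← hγa]
      have hR : arr (g p₀ (ext cf 0)) ≫ chain g n (ext cf) ≫ arr (g (ext cf n) p₀)
          = arr (g p₀ (c 0)) ≫ chain g n c ≫ arr (g (c n) p₀) := by rw [hextc]
      have harr : arr γ = recover cf := by
        rw [hrecover]
        show arr γ = Groupoid.inv (arr (g p₀ x₀)) ≫
          (arr (g p₀ (ext cf 0)) ≫ chain g n (ext cf) ≫ arr (g (ext cf n) p₀)) ≫
            Groupoid.inv (arr (g x₀ p₀))
        rw [hR, ← hdec]
        exact (conj_recover _ _ _).symm
      show FundamentalGroup.fromLoop ⟦γ⟧ = FundamentalGroup.fromLoop (recover cf)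
      have harr' : (⟦γ⟧ : Path.Homotopic.Quotient x₀ x₀) = recover cf := harr
      rw [harr']
    set f : FundamentalGroup X x₀ → (Fin (n + 1) → {w // w ∈ F}) :=
      fun a => if h : a ∈ A then (hrep a h).choose else fun _ => ⟨p₀, hsnF x₀⟩ with hf
    have hfspec : ∀ a ∈ A, a = FundamentalGroup.fromLoop (recover (f a)) := by
      intro a ha
      rw [hf]
      simp only [dif_pos ha]
      exact (hrep a ha).choose_spec
    calc A.ncard ≤ (Set.univ : Set (Fin (n + 1) → {w // w ∈ F})).ncard := by
          apply Set.ncard_le_ncard_of_injOn f (fun a _ => Set.mem_univ _) _ Set.finite_univ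
          intro a ha b hb hab
          rw [hfspec a ha, hfspec b hb, hab]
      _ = N ^ (n + 1) := by
          rw [Set.ncard_univ, Nat.card_eq_fintype_card, Fintype.card_fun,
            Fintype.card_coe, Fintype.card_fin]
  -- analytic part
  set C : ℝ := Real.log N / B with hC
  have hlogN : 0 ≤ Real.log N := Real.log_nonneg (by exact_mod_cast hN1)
  have hCnn : 0 ≤ C := div_nonneg hlogN hBpos.le
  have hbound : ∀ T : ℝ, 1 ≤ T → Real.log (P' T) / T ≤ C + 2 * Real.log N / T := by
    intro T hT
    have hTpos : 0 < T := lt_of_lt_of_le one_pos hT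
    set n : ℕ := ⌈T / B⌉₊ with hn
    have hTn : T ≤ ((n:ℝ) + 1) * B := by
      have h1 : T / B ≤ (n : ℝ) := Nat.le_ceil _
      have h2 : T = (T / B) * B := by field_simp
      rw [h2]
      have : (T / B) * B ≤ (n : ℝ) * B := mul_le_mul_of_nonneg_right h1 hBpos.le
      nlinarith
    have hc := hcount n T hTpos hTn
    have hn2 : (n : ℝ) ≤ T / B + 1 := (Nat.ceil_lt_add_one (by positivity)).le
    have hrhs : 0 ≤ C + 2 * Real.log N / T := by positivity
    by_cases hP0 : P' T = 0
    · rw [hP0]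
      simpa [Real.log_zero] using hrhs
    have hP1 : 1 ≤ P' T := Nat.one_le_iff_ne_zero.mpr hP0
    have hlog : Real.log (P' T) ≤ ((n:ℝ) + 1) * Real.log N := by
      calc Real.log (P' T) ≤ Real.log ((N:ℝ) ^ (n + 1)) := by
            apply Real.log_le_log (by exact_mod_cast hP1)
            exact_mod_cast hc
        _ = ((n:ℝ) + 1) * Real.log N := by
            rw [Real.log_pow]
            push_cast
            ring
    have hnum : Real.log (P' T) ≤ (T / B + 2) * Real.log N := by nlinarith
    calc Real.log (P' T) / T ≤ ((T / B + 2) * Real.log N) / T := by gcongr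
      _ = C + 2 * Real.log N / T := by
          rw [hC]
          field_simp
  -- limsup part
  have hev : ∀ᶠ T in atTop, Real.log (P' T) / T ≤ C + 2 * Real.log N / T :=
    eventually_atTop.mpr ⟨1, hbound⟩
  have htends : Tendsto (fun T : ℝ => C + 2 * Real.log N / T) atTop (nhds C) := by
    have h1 : Tendsto (fun T : ℝ => 2 * Real.log N / T) atTop (nhds 0) :=
      tendsto_const_nhds.div_atTop tendsto_id
    simpa using tendsto_const_nhds.add h1
  have hcob : IsCoboundedUnder (· ≤ ·) atTop (fun T : ℝ => Real.log (P' T) / T) := by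
    apply Filter.isCoboundedUnder_le_of_eventually_le (x := 0) atTop
    refine eventually_atTop.mpr ⟨1, fun T hT => ?_⟩
    have hTpos : (0:ℝ) < T := lt_of_lt_of_le one_pos hT
    apply div_nonneg _ hTpos.le
    rcases Nat.eq_zero_or_pos (P' T) with h | h
    · simp [h]
    · exact Real.log_nonneg (by exact_mod_cast h)
  have hbddg : IsBoundedUnder (· ≤ ·) atTop (fun T : ℝ => C + 2 * Real.log N / T) :=
    htends.isBoundedUnder_le
  have hlimsup : limsup (fun T : ℝ => Real.log (P' T) / T) atTop ≤ C :=
    le_trans (limsup_le_limsup hev hcob hbddg) (le_of_eq htends.limsup_eq)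
  refine le_trans hlimsup ?_
  have hμtr : 0 < (μ Set.univ).toReal := ENNReal.toReal_pos hμpos.ne' hμfin.ne
  have hNM : (N : ℝ) ≤ (μ Set.univ).toReal / (2 * α ^ 2 * s ^ 2) := by
    have h1 : ((N:ENNReal) * ENNReal.ofReal v).toReal ≤ (μ Set.univ).toReal :=
      ENNReal.toReal_mono hμfin.ne hFcard
    rw [ENNReal.toReal_mul, ENNReal.toReal_natCast, ENNReal.toReal_ofReal hvpos.le] at h1
    rw [le_div_iff₀ (by positivity)]
    calc (N:ℝ) * (2 * α ^ 2 * s ^ 2) = (N:ℝ) * v := by rw [hv, hr]; ring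
      _ ≤ _ := h1
  calc C = (1 / (β * s)) * Real.log N := by rw [hC, hB]; ring
    _ ≤ (1 / (β * s)) * Real.log ((μ Set.univ).toReal / (2 * α ^ 2 * s ^ 2)) := by
        apply mul_le_mul_of_nonneg_left _ (by positivity)
        apply (Real.log_le_log_iff (by exact_mod_cast hN1) (by positivity)).mpr hNM
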